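/- A temporal graph G is a (Δ₁,Δ₂)-cluster temporal graph if and only if every Δ₂-saturated set of its time-edges forms a Δ₁-temporal clique. -/

import Mathlib

/-- A time-edge: an (undirected) edge together with a time label. -/
abbrev TimeEdge := Sym2 ℕ × ℕ

/-- Vertices appearing in a set of time-edges. -/
def verts (S : Set TimeEdge) : Set ℕ := {v | ∃ te ∈ S, v ∈ te.1}

/-- Times appearing in a set of time-edges. -/
def times (S : Set TimeEdge) : Set ℕ := Prod.snd '' S

/-- The lifetime interval of a set of time-edges. -/
def lifetime (S : Set TimeEdge) : Set ℕ := Set.Icc (sInf (times S)) (sSup (times S))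

/-- Two sets of time-edges are Δ₂-independent if their vertex sets are disjoint or
their lifetime intervals are at temporal distance at least Δ₂. -/
def Indep (Δ₂ : ℕ) (S₁ S₂ : Set TimeEdge) : Prop :=
  Disjoint (verts S₁) (verts S₂) ∨
    ∀ s ∈ lifetime S₁, ∀ t ∈ lifetime S₂, Δ₂ ≤ max s t - min s t

/-- A set of time-edges is Δ₂-indivisible if it cannot be partitioned into two or more
nonempty pairwise Δ₂-independent subsets. -/
def Indivisible (Δ₂ : ℕ) (S : Set TimeEdge) : Prop :=
  ¬ ∃ P : Set (Set TimeEdge), P.Nontrivial ∧ (∀ A ∈ P, A.Nonempty) ∧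
      ⋃₀ P = S ∧ P.PairwiseDisjoint id ∧ P.Pairwise (Indep Δ₂)

/-- The edge `e` is Δ₁-dense in `[a,b]` with respect to the time-edge set `S`. -/
def DenseIn (S : Set TimeEdge) (Δ₁ : ℕ) (e : Sym2 ℕ) (a b : ℕ) : Prop :=
  ∀ τ ∈ Set.Icc a (max a (b + 1 - Δ₁)), ∃ t, t ∈ Set.Icc τ (τ + Δ₁ - 1) ∧ (e, t) ∈ S

/-- A set of time-edges forms a Δ₁-temporal clique if every pair of its vertices is
joined by an edge Δ₁-dense in its lifetime. -/
def IsTemporalClique (Δ₁ : ℕ) (K : Set TimeEdge) : Prop :=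
  ∀ x ∈ verts K, ∀ y ∈ verts K, x ≠ y →
    DenseIn K Δ₁ s(x, y) (sInf (times K)) (sSup (times K))

/-- A (Δ₁,Δ₂)-cluster temporal graph: the time-edges partition into pairwise
Δ₂-independent Δ₁-temporal cliques. -/
def IsClusterTemporalGraph (Δ₁ Δ₂ : ℕ) (E : Set TimeEdge) : Prop :=
  ∃ P : Set (Set TimeEdge), ⋃₀ P = E ∧ P.PairwiseDisjoint id ∧
    (∀ K ∈ P, IsTemporalClique Δ₁ K) ∧ P.Pairwise (Indep Δ₂)

/-- A Δ₂-saturated set of time-edges in `E`: a Δ₂-indivisible subset of `E` such that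
adding any other time-edge of `E` destroys indivisibility. -/
def Saturated (Δ₂ : ℕ) (E S : Set TimeEdge) : Prop :=
  S ⊆ E ∧ Indivisible Δ₂ S ∧ ∀ te ∈ E, te ∉ S → ¬ Indivisible Δ₂ (insert te S)

/-- The induced temporal subgraph on a vertex set `A`. -/
def induced (E : Set TimeEdge) (A : Set ℕ) : Set TimeEdge :=
  {te ∈ E | ∀ v ∈ te.1, v ∈ A}

/-- Two single time-edges are Δ-independent. -/
def TEIndep (Δ : ℕ) (te₁ te₂ : TimeEdge) : Prop :=
  (∀ v ∈ te₁.1, v ∉ te₂.1) ∨ Δ ≤ max te₁.2 te₂.2 - min te₁.2 te₂.2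


section Aux

variable {Δ₂ : ℕ}

lemma verts_mono {S T : Set TimeEdge} (h : S ⊆ T) : verts S ⊆ verts T :=
  fun _ ⟨te, hte, hv⟩ => ⟨te, h hte, hv⟩

lemma mem_lifetime {S : Set TimeEdge} (hfin : S.Finite) {x : TimeEdge} (hx : x ∈ S) :
    x.2 ∈ lifetime S :=
  Set.mem_Icc.mpr ⟨Nat.sInf_le ⟨x, hx, rfl⟩, le_csSup ((hfin.image _).bddAbove) ⟨x, hx, rfl⟩⟩

lemma lifetime_mono {S T : Set TimeEdge} (hST : S ⊆ T) (hS : S.Nonempty) (hT : T.Finite) :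
    lifetime S ⊆ lifetime T :=
  Set.Icc_subset_Icc
    (csInf_le_csInf (OrderBot.bddBelow _) (hS.image _) (Set.image_mono hST))
    (csSup_le_csSup ((hT.image _).bddAbove) (hS.image _) (Set.image_mono hST))

lemma indep_mono {X Y X' Y' : Set TimeEdge} (hXf : X.Finite) (hYf : Y.Finite)
    (hX' : X' ⊆ X) (hY' : Y' ⊆ Y) (hX'ne : X'.Nonempty) (hY'ne : Y'.Nonempty)
    (h : Indep Δ₂ X Y) : Indep Δ₂ X' Y' := by
  rcases h with h | h
  · exact Or.inl (h.mono (verts_mono hX') (verts_mono hY'))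
  · exact Or.inr fun s hs t ht =>
      h s (lifetime_mono hX' hX'ne hXf hs) t (lifetime_mono hY' hY'ne hYf ht)

lemma indiv_singleton (Δ₂ : ℕ) (te : TimeEdge) : Indivisible Δ₂ {te} := by
  rintro ⟨P, ⟨A, hA, B, hB, hAB⟩, hne, hun, -, -⟩
  have hA' : A ⊆ {te} := hun ▸ Set.subset_sUnion_of_mem hA
  have hB' : B ⊆ {te} := hun ▸ Set.subset_sUnion_of_mem hB
  rcases (Set.subset_singleton_iff_eq.mp hA') with h | h
  · exact (hne A hA).ne_empty h
  rcases (Set.subset_singleton_iff_eq.mp hB') with h' | h'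
  · exact (hne B hB).ne_empty h'
  exact hAB (h.trans h'.symm)

lemma indiv_empty (Δ₂ : ℕ) : Indivisible Δ₂ (∅ : Set TimeEdge) := by
  rintro ⟨P, ⟨A, hA, -, -, -⟩, hne, hun, -, -⟩
  obtain ⟨a, ha⟩ := hne A hA
  have : a ∈ ⋃₀ P := ⟨A, hA, ha⟩
  rw [hun] at this
  exact this

lemma not_indep_of_mem {S T : Set TimeEdge} (hS : S.Finite) (hT : T.Finite)
    (hΔ : 0 < Δ₂) {x : TimeEdge} (hxS : x ∈ S) (hxT : x ∈ T) : ¬ Indep Δ₂ S T := by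
  rintro (h | h)
  · exact Set.disjoint_left.mp h ⟨x, hxS, Sym2.out_fst_mem x.1⟩ ⟨x, hxT, Sym2.out_fst_mem x.1⟩
  · have := h x.2 (mem_lifetime hS hxS) x.2 (mem_lifetime hT hxT)
    omega

lemma subset_of_part {P : Set (Set TimeEdge)} (hfin : (⋃₀ P).Finite)
    (hind : P.Pairwise (Indep Δ₂)) (hdis : P.PairwiseDisjoint id)
    {X : Set TimeEdge} (hX : Indivisible Δ₂ X) (hXne : X.Nonempty) (hXsub : X ⊆ ⋃₀ P) :
    ∃ A ∈ P, X ⊆ A := by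
  by_contra hcon
  push_neg at hcon
  apply hX
  refine ⟨(fun A => X ∩ A) '' {A | A ∈ P ∧ (X ∩ A).Nonempty}, ?_, ?_, ?_, ?_, ?_⟩
  · obtain ⟨x, hx⟩ := hXne
    obtain ⟨A₀, hA₀, hxA₀⟩ := hXsub hx
    obtain ⟨x', hx'X, hx'A₀⟩ := Set.not_subset.mp (hcon A₀ hA₀)
    obtain ⟨A₁, hA₁, hx'A₁⟩ := hXsub hx'X
    have hA01 : A₀ ≠ A₁ := fun h => hx'A₀ (h ▸ hx'A₁)
    refine ⟨X ∩ A₀, ⟨A₀, ⟨hA₀, ⟨x, hx, hxA₀⟩⟩, rfl⟩,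
            X ∩ A₁, ⟨A₁, ⟨hA₁, ⟨x', hx'X, hx'A₁⟩⟩, rfl⟩, fun heq => ?_⟩
    have : x ∈ X ∩ A₁ := heq ▸ ⟨hx, hxA₀⟩
    exact Set.disjoint_left.mp (hdis hA₀ hA₁ hA01) hxA₀ this.2
  · rintro B ⟨A, ⟨-, hne⟩, rfl⟩
    exact hne
  · ext a
    constructor
    · rintro ⟨B, ⟨A, ⟨-, -⟩, rfl⟩, ha⟩
      exact ha.1
    · intro ha
      obtain ⟨A, hA, haA⟩ := hXsub ha
      exact ⟨X ∩ A, ⟨A, ⟨hA, ⟨a, ha, haA⟩⟩, rfl⟩, ⟨ha, haA⟩⟩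
  · rintro B ⟨A, ⟨hA, -⟩, rfl⟩ B' ⟨A', ⟨hA', -⟩, rfl⟩ hBB'
    have hAA' : A ≠ A' := fun h => hBB' (by rw [h])
    exact (hdis hA hA' hAA').mono Set.inter_subset_right Set.inter_subset_right
  · rintro B ⟨A, ⟨hA, hne⟩, rfl⟩ B' ⟨A', ⟨hA', hne'⟩, rfl⟩ hBB'
    have hAA' : A ≠ A' := fun h => hBB' (by rw [h])
    exact indep_mono (hfin.subset (Set.subset_sUnion_of_mem hA))
      (hfin.subset (Set.subset_sUnion_of_mem hA'))
      Set.inter_subset_right Set.inter_subset_right hne hne' (hind hA hA' hAA')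

lemma indiv_union {X Y : Set TimeEdge} (hfin : (X ∪ Y).Finite)
    (hX : Indivisible Δ₂ X) (hY : Indivisible Δ₂ Y) (hnind : ¬ Indep Δ₂ X Y) :
    Indivisible Δ₂ (X ∪ Y) := by
  have hXne : X.Nonempty := by
    rcases Set.eq_empty_or_nonempty X with rfl | h
    · exact absurd (Or.inl (by simp [Set.disjoint_left, verts])) hnind
    · exact h
  have hYne : Y.Nonempty := by
    rcases Set.eq_empty_or_nonempty Y with rfl | h
    · exact absurd (Or.inl (by simp [Set.disjoint_right, verts])) hnind
    · exact h
  rintro ⟨P, hnt, hne, hun, hdis, hind⟩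
  obtain ⟨A, hA, hXA⟩ := subset_of_part (hun ▸ hfin) hind hdis hX hXne
    (hun ▸ Set.subset_union_left)
  obtain ⟨B, hB, hYB⟩ := subset_of_part (hun ▸ hfin) hind hdis hY hYne
    (hun ▸ Set.subset_union_right)
  have hfA : A.Finite := (hun ▸ hfin).subset (Set.subset_sUnion_of_mem hA)
  have hfB : B.Finite := (hun ▸ hfin).subset (Set.subset_sUnion_of_mem hB)
  have hAB : A = B := by
    by_contra hne'
    exact hnind (indep_mono hfA hfB hXA hYB hXne hYne (hind hA hB hne'))
  obtain ⟨C, hC, D, hD, hCD⟩ := hnt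
  have hex : ∃ C ∈ P, C ≠ A := by
    rcases eq_or_ne C A with rfl | h
    · exact ⟨D, hD, fun h => hCD h.symm⟩
    · exact ⟨C, hC, h⟩
  obtain ⟨C', hC', hC'A⟩ := hex
  obtain ⟨c, hc⟩ := hne C' hC'
  have hcXY : c ∈ X ∪ Y := hun ▸ (⟨C', hC', hc⟩ : c ∈ ⋃₀ P)
  have hcA : c ∈ A := by
    rcases hcXY with h | h
    · exact hXA h
    · exact hAB ▸ hYB h
  exact Set.disjoint_left.mp (hdis hC' hA hC'A) hc hcA

lemma exists_maximal {E S : Set TimeEdge} (hE : E.Finite) (hSE : S ⊆ E)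
    (hS : Indivisible Δ₂ S) :
    ∃ T, S ⊆ T ∧ T ⊆ E ∧ Indivisible Δ₂ T ∧
      ∀ U, U ⊆ E → Indivisible Δ₂ U → T ⊆ U → T = U := by
  have hfin : {T : Set TimeEdge | S ⊆ T ∧ T ⊆ E ∧ Indivisible Δ₂ T}.Finite :=
    hE.finite_subsets.subset (fun T hT => hT.2.1)
  obtain ⟨T, hT, hmax⟩ := hfin.exists_maximalFor id _ ⟨S, Set.Subset.rfl, hSE, hS⟩
  exact ⟨T, hT.1, hT.2.1, hT.2.2,
    fun U hUE hU hTU => hTU.antisymm (hmax ⟨hT.1.trans hTU, hUE, hU⟩ hTU)⟩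

end Aux

theorem cluster_iff_saturated_cliques (Δ₁ Δ₂ : ℕ) (h1 : 1 ≤ Δ₁) (h2 : Δ₁ < Δ₂)
    (E : Set TimeEdge) (hE : E.Finite) :
    IsClusterTemporalGraph Δ₁ Δ₂ E ↔
      ∀ S : Set TimeEdge, Saturated Δ₂ E S → IsTemporalClique Δ₁ S := by
  constructor
  · rintro ⟨P, hun, hdis, hclique, hind⟩ S hsat
    obtain ⟨hSE, hSind, hSsat⟩ := hsat
    intro x hx y hy hxy
    obtain ⟨tex, htex, hxtex⟩ := hx
    have hSne : S.Nonempty := ⟨tex, htex⟩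
    have hSfin : S.Finite := hE.subset hSE
    obtain ⟨K, hK, hSK⟩ := subset_of_part (hun ▸ hE) hind hdis hSind hSne (hun ▸ hSE)
    have hKE : K ⊆ E := hun ▸ Set.subset_sUnion_of_mem hK
    have hKfin : K.Finite := hE.subset hKE
    have hxv : x ∈ verts S := ⟨tex, htex, hxtex⟩
    have htsub : times S ⊆ times K := Set.image_mono hSK
    have htSne : (times S).Nonempty := hSne.image _
    have hmK : sInf (times K) ≤ sInf (times S) :=
      csInf_le_csInf (OrderBot.bddBelow _) htSne htsub
    have hMK : sSup (times S) ≤ sSup (times K) :=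
      csSup_le_csSup ((hKfin.image _).bddAbove) htSne htsub
    have hmM : sInf (times S) ≤ sSup (times S) :=
      csInf_le_csSup htSne (OrderBot.bddBelow _) ((hSfin.image _).bddAbove)
    have hdense := hclique K hK x (verts_mono hSK hxv) y (verts_mono hSK hy) hxy
    intro τ hτ
    rw [Set.mem_Icc] at hτ
    have hτ' : min τ (max (sInf (times K)) (sSup (times K) + 1 - Δ₁)) ∈
        Set.Icc (sInf (times K)) (max (sInf (times K)) (sSup (times K) + 1 - Δ₁)) := by
      rw [Set.mem_Icc]
      omega
    obtain ⟨t, ht, htK⟩ := hdense _ hτ'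
    rw [Set.mem_Icc] at ht
    have hteS : (s(x,y), t) ∈ S := by
      by_contra hnot
      apply hSsat _ (hKE htK) hnot
      rw [Set.insert_eq]
      refine indiv_union (hE.subset (Set.union_subset (by simpa using hKE htK) hSE))
        (indiv_singleton Δ₂ _) hSind ?_
      rintro (hd | hd)
      · exact Set.disjoint_left.mp hd ⟨(s(x,y), t), rfl, Sym2.mem_mk_left x y⟩ hxv
      · have h0 : ((s(x,y), t) : TimeEdge).2 ∈ lifetime {((s(x,y), t) : TimeEdge)} :=
          mem_lifetime (Set.finite_singleton _) rfl
        have h1' : min (sSup (times S)) (max (sInf (times S)) t) ∈ lifetime S :=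
          Set.mem_Icc.mpr ⟨by omega, by omega⟩
        have := hd _ h0 _ h1'
        simp only at this
        omega
    have htm : sInf (times S) ≤ t := Nat.sInf_le ⟨_, hteS, rfl⟩
    have htM : t ≤ sSup (times S) := le_csSup ((hSfin.image _).bddAbove) ⟨_, hteS, rfl⟩
    exact ⟨t, Set.mem_Icc.mpr ⟨by omega, by omega⟩, hteS⟩
  · intro hsatcl
    set P : Set (Set TimeEdge) :=
      {T | T ⊆ E ∧ Indivisible Δ₂ T ∧ ∀ U, U ⊆ E → Indivisible Δ₂ U → T ⊆ U → T = U}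
      with hP
    have hkey : ∀ T ∈ P, ∀ T' ∈ P, T ≠ T' → Indep Δ₂ T T' := by
      intro T hT T' hT' hne
      by_contra hni
      have hun : T ∪ T' ⊆ E := Set.union_subset hT.1 hT'.1
      have hindiv := indiv_union (hE.subset hun) hT.2.1 hT'.2.1 hni
      have h1' := hT.2.2 (T ∪ T') hun hindiv Set.subset_union_left
      have h2' := hT'.2.2 (T ∪ T') hun hindiv Set.subset_union_right
      exact hne (h1'.trans h2'.symm)
    refine ⟨P, ?_, ?_, ?_, fun T hT T' hT' hne => hkey T hT T' hT' hne⟩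
    · apply Set.Subset.antisymm
      · exact Set.sUnion_subset fun T hT => hT.1
      · intro te hte
        obtain ⟨T, hST, hTE, hTind, hTmax⟩ :=
          exists_maximal hE (Set.singleton_subset_iff.mpr hte) (indiv_singleton Δ₂ te)
        exact ⟨T, ⟨hTE, hTind, hTmax⟩, hST rfl⟩
    · intro T hT T' hT' hne
      rw [Function.onFun, Set.disjoint_left]
      intro a haT haT'
      exact not_indep_of_mem (hE.subset hT.1) (hE.subset hT'.1) (by omega) haT haT'
        (hkey T hT T' hT' hne)
    · intro T hT
      apply hsatcl
      refine ⟨hT.1, hT.2.1, fun te hteE hteT hind => ?_⟩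
      have := hT.2.2 (insert te T) (Set.insert_subset hteE hT.1) hind
        (Set.subset_insert te T)
      exact hteT (this ▸ Set.mem_insert te T)
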